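/- Let G_c be the universal comparison graph of the lattice graph (ℤ², ℓ¹) (which is well defined since ∂_V^{n+1} ≥ ∂_V^n holds on ℤ²). Then for every integer r ≥ 1, the sphere S(r; G_c) = {i ∈ ℕ_{≥1} : d_{G_c}(i, 1) = r} has exactly 4r elements and the closed ball B(r; G_c) = {i ∈ ℕ_{≥1} : d_{G_c}(i, 1) ≤ r} has exactly 1 + 2r(r+1) elements, where d_{G_c} denotes graph distance in G_c. -/

import Mathlib

open scoped ENNReal Classical

noncomputable section

/-- A function on a countable vertex set *vanishes at infinity* if every
super-level set `{x : t < |f x|}` with `t > 0` is finite. -/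
def VanishesAtInfinity {V : Type*} (f : V → ℝ) : Prop :=
  ∀ t : ℝ, 0 < t → {x : V | t < |f x|}.Finite

/-- The `k`-th largest value (k ≥ 1, counted with multiplicity) assumed by `|f|`. -/
def kthLargest {V : Type*} (f : V → ℝ) (k : ℕ) : ℝ :=
  sInf {t : ℝ | 0 ≤ t ∧ {x : V | t < |f x|}.Finite ∧ {x : V | t < |f x|}.ncard < k}

/-- The rearrangement of `f` with respect to the labelling `η`, where `η n` is the
vertex carrying label `n + 1`:  `f*(η (k-1)) = k`-th largest value of `|f|`. -/
def rearrangementOf {V : Type*} (η : ℕ → V) (f : V → ℝ) : V → ℝ :=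
  fun v => kthLargest f (Function.invFun η v + 1)

/-- `‖∇f‖_p^p = Σ_{x∼y} |f x - f y|^p`, each edge counted once (value in `ℝ≥0∞`). -/
def gradPPow {V : Type*} (G : SimpleGraph V) (f : V → ℝ) (p : ℝ) : ℝ≥0∞ :=
  ∑' e : G.edgeSet, Sym2.lift
    ⟨fun x y => ENNReal.ofReal (|f x - f y| ^ p), fun x y => by dsimp only; rw [abs_sub_comm]⟩
    (e : Sym2 V)

/-- `‖∇f‖_p = (Σ_{x∼y} |f x - f y|^p)^{1/p}` (value in `ℝ≥0∞`). -/
def gradP {V : Type*} (G : SimpleGraph V) (f : V → ℝ) (p : ℝ) : ℝ≥0∞ :=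
  gradPPow G f p ^ (1 / p)

/-- `‖∇f‖_∞ = sup_{x∼y} |f x - f y|` (value in `ℝ≥0∞`). -/
def gradTop {V : Type*} (G : SimpleGraph V) (f : V → ℝ) : ℝ≥0∞ :=
  ⨆ e : G.edgeSet, Sym2.lift
    ⟨fun x y => ENNReal.ofReal |f x - f y|, fun x y => by dsimp only; rw [abs_sub_comm]⟩
    (e : Sym2 V)

/-- The vertex boundary `∂_V(X)` of a set of vertices. -/
def vertexBoundary {V : Type*} (G : SimpleGraph V) (X : Set V) : Set V :=
  {z : V | z ∉ X ∧ ∃ x ∈ X, G.Adj z x}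

/-- The isoperimetric number `∂_V^n`: the least vertex-perimeter among sets of `n` vertices. -/
def isoNum {V : Type*} (G : SimpleGraph V) (n : ℕ) : ℕ :=
  sInf {m : ℕ | ∃ X : Set V, X.Finite ∧ X.ncard = n ∧
    (vertexBoundary G X).Finite ∧ (vertexBoundary G X).ncard = m}

/-- `∂_V^n` with the convention `∂_V^0 = 1`. -/
def isoNum₀ {V : Type*} (G : SimpleGraph V) (n : ℕ) : ℕ :=
  if n = 0 then 1 else isoNum G n

/-- `b` is a neighbour of `a` larger than `a` in the universal comparison graph:
`(a-1) + ∂_V^{a-1} < b ≤ a + ∂_V^a`. -/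
def cAdj {V : Type*} (G : SimpleGraph V) (a b : ℕ+) : Prop :=
  a < b ∧ (a : ℕ) - 1 + isoNum₀ G ((a : ℕ) - 1) < (b : ℕ) ∧
    (b : ℕ) ≤ (a : ℕ) + isoNum G (a : ℕ)

/-- The universal comparison graph `G_c` of `G`, a graph on the positive integers. -/
def comparisonGraph {V : Type*} (G : SimpleGraph V) : SimpleGraph ℕ+ where
  Adj a b := cAdj G a b ∨ cAdj G b a
  symm := ⟨fun a b h => Or.symm h⟩
  loopless := ⟨fun a h => by
    rcases h with h | h <;> exact absurd h.1 (lt_irrefl a)⟩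

/-- The lattice graph `(ℤ², ℓ¹)`. -/
def latticeZ2 : SimpleGraph (ℤ × ℤ) where
  Adj x y := |x.1 - y.1| + |x.2 - y.2| = 1
  symm := by
    constructor
    intro x y h
    try dsimp only at h ⊢
    rw [abs_sub_comm y.1 x.1, abs_sub_comm y.2 x.2]
    exact h
  loopless := by constructor; intro x h; simp at h

/-- The lattice graph `(ℤ^d, ℓ¹)`. -/
def latticeZd (d : ℕ) : SimpleGraph (Fin d → ℤ) where
  Adj x y := (∑ i, |x i - y i|) = 1
  symm := by
    constructor
    intro x y h
    try dsimp only at h ⊢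
    have : ∀ i, |y i - x i| = |x i - y i| := fun i => abs_sub_comm _ _
    simpa [this] using h
  loopless := by constructor; intro x h; simp at h

/-- `ℓ¹`-norm on `ℤ²`. -/
def l1 (x : ℤ × ℤ) : ℤ := |x.1| + |x.2|

/-- One step of the counterclockwise square spiral on `ℤ²`. -/
def spiralNext : ℤ × ℤ → ℤ × ℤ := fun p =>
  if p.1 = 0 ∧ p.2 = 0 then (1, 0)
  else if p.2 < 0 ∧ |p.1| ≤ -p.2 then (p.1 + 1, p.2)
  else if 0 < p.1 ∧ |p.2| < p.1 then (p.1, p.2 + 1)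
  else if 0 < p.2 ∧ p.1 ≤ p.2 ∧ -p.1 < p.2 then (p.1 - 1, p.2)
  else (p.1, p.2 - 1)
/-- The spiral labelling of `ℤ²` (0-indexed): `spiral (k-1)` is the vertex with
spiral label `k`, so `spiral 0 = (0,0)`, `spiral 1 = (1,0)`, `spiral 2 = (1,1)`, … -/
def spiral : ℕ → ℤ × ℤ := fun n => spiralNext^[n] (0, 0)


def sphSet (m : ℕ) : Set (ℤ × ℤ) := {p | p.1.natAbs + p.2.natAbs = m}
def ballSet (k : ℕ) : Set (ℤ × ℤ) := {p | p.1.natAbs + p.2.natAbs ≤ k}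

def sphFun (m : ℕ) (j : ℕ) : ℤ × ℤ :=
  (if j ≤ 2*m then (m:ℤ) - j else (j:ℤ) - 3*m,
   if j ≤ m then (j:ℤ) else if j ≤ 3*m then 2*(m:ℤ) - j else (j:ℤ) - 4*m)

def sphF (m : ℕ) : Finset (ℤ × ℤ) := (Finset.range (4*m)).image (sphFun m)

lemma sphF_coe {m : ℕ} (hm : 1 ≤ m) : (↑(sphF m) : Set (ℤ × ℤ)) = sphSet m := by
  ext p
  simp only [sphF, Finset.coe_image, Finset.coe_range, Set.mem_image, Set.mem_Iio,
    sphSet, Set.mem_setOf_eq]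
  constructor
  · rintro ⟨j, hj, rfl⟩
    unfold sphFun
    split_ifs <;> simp only [] <;> omega
  · intro hp
    rcases p with ⟨x, y⟩
    simp only [] at hp ⊢
    rcases (by omega : (0 < x ∧ 0 ≤ y) ∨ (x ≤ 0 ∧ 0 < y) ∨ (x < 0 ∧ y ≤ 0) ∨ (0 ≤ x ∧ y < 0))
      with ⟨h1,h2⟩|⟨h1,h2⟩|⟨h1,h2⟩|⟨h1,h2⟩
    · refine ⟨y.natAbs, by omega, ?_⟩
      unfold sphFun; rw [Prod.ext_iff]; dsimp only; split_ifs <;> constructor <;> omega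
    · refine ⟨m + x.natAbs, by omega, ?_⟩
      unfold sphFun; rw [Prod.ext_iff]; dsimp only; split_ifs <;> constructor <;> omega
    · refine ⟨2*m + y.natAbs, by omega, ?_⟩
      unfold sphFun; rw [Prod.ext_iff]; dsimp only; split_ifs <;> constructor <;> omega
    · refine ⟨3*m + x.natAbs, by omega, ?_⟩
      unfold sphFun; rw [Prod.ext_iff]; dsimp only; split_ifs <;> constructor <;> omega

lemma sphF_card {m : ℕ} (hm : 1 ≤ m) : (sphF m).card = 4*m := by
  rw [sphF, Finset.card_image_of_injOn, Finset.card_range]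
  intro j hj j' hj' h
  simp only [Finset.coe_range, Set.mem_Iio] at hj hj'
  unfold sphFun at h
  rw [Prod.ext_iff] at h
  obtain ⟨h1, h2⟩ := h
  split_ifs at h1 h2 <;> omega

lemma sph_fin (m : ℕ) : (sphSet m).Finite := by
  rcases Nat.eq_zero_or_pos m with rfl | hm
  · apply Set.Finite.subset (Set.finite_singleton ((0:ℤ),(0:ℤ)))
    rintro ⟨x,y⟩ h
    simp only [sphSet, Set.mem_setOf_eq] at h
    simp [Prod.ext_iff]; omega
  · rw [← sphF_coe hm]; exact (sphF m).finite_toSet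

lemma sph_ncard {m : ℕ} (hm : 1 ≤ m) : (sphSet m).ncard = 4*m := by
  rw [← sphF_coe hm, Set.ncard_coe_finset, sphF_card hm]

lemma lattice_adj' {p q : ℤ × ℤ} :
    latticeZ2.Adj p q ↔ (p.1 - q.1).natAbs + (p.2 - q.2).natAbs = 1 := by
  show |p.1 - q.1| + |p.2 - q.2| = 1 ↔ _
  rw [Int.abs_eq_natAbs, Int.abs_eq_natAbs]
  omega

lemma ball_zero : ballSet 0 = {((0:ℤ), (0:ℤ))} := by
  ext ⟨x,y⟩; simp only [ballSet, Set.mem_setOf_eq, Set.mem_singleton_iff, Prod.ext_iff]; omega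

lemma ball_succ (k : ℕ) : ballSet (k+1) = ballSet k ∪ sphSet (k+1) := by
  ext ⟨x,y⟩
  simp only [ballSet, sphSet, Set.mem_setOf_eq, Set.mem_union]; omega

lemma ball_fin (k : ℕ) : (ballSet k).Finite := by
  induction k with
  | zero => rw [ball_zero]; exact Set.finite_singleton _
  | succ k ih => rw [ball_succ]; exact ih.union (sph_fin _)

lemma ball_ncard (k : ℕ) : (ballSet k).ncard = 1 + 2*k*(k+1) := by
  induction k with
  | zero => rw [ball_zero]; simp
  | succ k ih =>
    rw [ball_succ, Set.ncard_union_eq ?_ (ball_fin k) (sph_fin _), ih, sph_ncard (by omega)]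
    · ring
    · rw [Set.disjoint_iff_inter_eq_empty]
      ext ⟨x,y⟩
      simp only [ballSet, sphSet, Set.mem_inter_iff, Set.mem_setOf_eq, Set.mem_empty_iff_false,
        iff_false, not_and]
      omega

lemma bdry_ball (k : ℕ) : vertexBoundary latticeZ2 (ballSet k) = sphSet (k+1) := by
  ext ⟨x, y⟩
  simp only [vertexBoundary, ballSet, sphSet, Set.mem_setOf_eq]
  constructor
  · rintro ⟨hz, ⟨a,b⟩, hx, hadj⟩
    rw [lattice_adj'] at hadj
    simp only [ballSet, Set.mem_setOf_eq] at hx hz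
    dsimp only at hadj ⊢
    omega
  · intro h
    refine ⟨by omega, ?_⟩
    rcases (by omega : (0 < x) ∨ (x < 0) ∨ (x = 0 ∧ 0 < y) ∨ (x = 0 ∧ y < 0)) with h1|h1|⟨h1,h2⟩|⟨h1,h2⟩
    · exact ⟨(x-1, y), by simp only [Set.mem_setOf_eq]; omega, by rw [lattice_adj']; omega⟩
    · exact ⟨(x+1, y), by simp only [Set.mem_setOf_eq]; omega, by rw [lattice_adj']; omega⟩
    · exact ⟨(x, y-1), by simp only [Set.mem_setOf_eq]; omega, by rw [lattice_adj']; omega⟩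
    · exact ⟨(x, y+1), by simp only [Set.mem_setOf_eq]; omega, by rw [lattice_adj']; omega⟩

def isoSet (n : ℕ) : Set ℕ :=
  {m : ℕ | ∃ X : Set (ℤ×ℤ), X.Finite ∧ X.ncard = n ∧
    (vertexBoundary latticeZ2 X).Finite ∧ (vertexBoundary latticeZ2 X).ncard = m}

lemma isoNum_eq_sInf (n : ℕ) : isoNum latticeZ2 n = sInf (isoSet n) := rfl

/-- boundary of a finite set is finite -/
lemma bdryFin {X : Set (ℤ × ℤ)} (hX : X.Finite) :
    (vertexBoundary latticeZ2 X).Finite := by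
  have hsub : vertexBoundary latticeZ2 X ⊆
      ⋃ x ∈ X, ({(x.1+1,x.2),(x.1-1,x.2),(x.1,x.2+1),(x.1,x.2-1)} : Set (ℤ×ℤ)) := by
    rintro z ⟨hz, x, hx, hadj⟩
    rw [lattice_adj'] at hadj
    have h4 : (z.1 = x.1+1 ∧ z.2 = x.2) ∨ (z.1 = x.1-1 ∧ z.2 = x.2)
        ∨ (z.1 = x.1 ∧ z.2 = x.2+1) ∨ (z.1 = x.1 ∧ z.2 = x.2-1) := by omega
    have hz' : ∀ a b : ℤ, z.1 = a → z.2 = b → z = (a, b) := by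
      rintro a b rfl rfl; rfl
    apply Set.mem_biUnion hx
    rcases h4 with ⟨h1,h2⟩|⟨h1,h2⟩|⟨h1,h2⟩|⟨h1,h2⟩ <;> rw [hz' _ _ h1 h2] <;> simp
  exact Set.Finite.subset (hX.biUnion (fun x _ => by
    apply Set.Finite.insert; apply Set.Finite.insert; apply Set.Finite.insert
    exact Set.finite_singleton _)) hsub

def segFin (n : ℕ) : Finset (ℤ × ℤ) := (Finset.range n).image (fun i : ℕ => ((i:ℤ), (0:ℤ)))

lemma isoSet_nonempty (n : ℕ) : (isoSet n).Nonempty := by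
  classical
  refine ⟨_, (↑(segFin n) : Set (ℤ×ℤ)), Finset.finite_toSet _, ?_,
    bdryFin (Finset.finite_toSet _), rfl⟩
  have hinj : Function.Injective (fun i : ℕ => ((i:ℤ), (0:ℤ))) := by
    intro i j h; simpa using h
  rw [Set.ncard_coe_finset, segFin, Finset.card_image_of_injective _ hinj, Finset.card_range]

lemma isoNum_mem (n : ℕ) : isoNum latticeZ2 n ∈ isoSet n := Nat.sInf_mem (isoSet_nonempty n)

lemma isoNum_ball_le (k : ℕ) : isoNum latticeZ2 (1 + 2*k*(k+1)) ≤ 4*(k+1) := by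
  apply Nat.sInf_le
  exact ⟨ballSet k, ball_fin k, ball_ncard k, by
    rw [bdry_ball]; exact (sph_fin _), by rw [bdry_ball]; exact sph_ncard (by omega)⟩

lemma isoNum_succ_le (a : ℕ) : isoNum latticeZ2 (a+1) ≤ isoNum latticeZ2 (a+2) + 1 := by
  obtain ⟨X, hXf, hXc, hBf, hBc⟩ := isoNum_mem (a+2)
  have hne : X.Nonempty := Set.nonempty_of_ncard_ne_zero (by omega)
  obtain ⟨p, hp⟩ := hne
  have hsub : vertexBoundary latticeZ2 (X \ {p}) ⊆ vertexBoundary latticeZ2 X ∪ {p} := by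
    rintro z ⟨hz, x, hx, hadj⟩
    by_cases hzp : z = p
    · right; exact hzp
    · left; exact ⟨fun hzX => hz ⟨hzX, hzp⟩, x, hx.1, hadj⟩
  have h1 : isoNum latticeZ2 (a+1) ≤ (vertexBoundary latticeZ2 (X \ {p})).ncard := by
    apply Nat.sInf_le
    refine ⟨X \ {p}, hXf.diff, ?_, (hBf.union (Set.finite_singleton p)).subset hsub, rfl⟩
    rw [Set.ncard_diff_singleton_of_mem hp, hXc]
    omega
  refine h1.trans ?_
  calc (vertexBoundary latticeZ2 (X \ {p})).ncard
      ≤ (vertexBoundary latticeZ2 X ∪ {p}).ncard :=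
        Set.ncard_le_ncard hsub (hBf.union (Set.finite_singleton p))
    _ ≤ (vertexBoundary latticeZ2 X).ncard + ({p} : Set (ℤ×ℤ)).ncard := Set.ncard_union_le _ _
    _ = isoNum latticeZ2 (a+2) + 1 := by rw [hBc, Set.ncard_singleton]

lemma isoNum_add_le (a d : ℕ) : isoNum latticeZ2 (a+1) ≤ isoNum latticeZ2 (a+1+d) + d := by
  induction d with
  | zero => simp
  | succ d ih =>
    refine ih.trans ?_
    have := isoNum_succ_le (a+d)
    have h2 : a+1+d = a+d+1 := by omega
    have h3 : a+1+(d+1) = a+d+2 := by omega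
    rw [h2, h3]
    omega

lemma fiber_card_eq (s : Finset (ℤ×ℤ)) (c : ℤ) :
    (s.filter (fun p => p.1 + p.2 = c)).card
      = ((s.filter (fun p => p.1 + p.2 = c)).image (fun p => p.1 - p.2)).card := by
  rw [Finset.card_image_of_injOn]
  intro p hp q hq h
  simp only [Finset.coe_filter, Set.mem_setOf_eq] at hp hq
  have h' : p.1 - p.2 = q.1 - q.2 := h
  have hh : p.1 = q.1 ∧ p.2 = q.2 := by omega
  exact Prod.ext hh.1 hh.2

lemma step_up {Xf Yf : Finset (ℤ×ℤ)}
    (hup : ∀ p ∈ Xf, ((p.1+1, p.2) ∈ Yf ∧ (p.1, p.2+1) ∈ Yf))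
    {c : ℤ} (hc : 0 < (Xf.filter (fun p => p.1 + p.2 = c)).card) :
    (Xf.filter (fun p => p.1 + p.2 = c)).card + 1
      ≤ (Yf.filter (fun p => p.1 + p.2 = c+1)).card := by
  classical
  set S := (Xf.filter (fun p => p.1 + p.2 = c)).image (fun p => p.1 - p.2) with hS
  set T := (Yf.filter (fun p => p.1 + p.2 = c+1)).image (fun p => p.1 - p.2) with hT
  have hSne : S.Nonempty := Finset.image_nonempty.mpr (Finset.card_pos.mp hc)
  have hsub : S.image (fun v => v + 1) ∪ {S.min' hSne - 1} ⊆ T := by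
    intro v hv
    rcases Finset.mem_union.mp hv with hv | hv
    · obtain ⟨w, hw, rfl⟩ := Finset.mem_image.mp hv
      obtain ⟨p, hp, rfl⟩ := Finset.mem_image.mp hw
      rw [Finset.mem_filter] at hp
      apply Finset.mem_image.mpr
      exact ⟨(p.1+1, p.2), Finset.mem_filter.mpr ⟨(hup p hp.1).1, by dsimp; omega⟩,
        by dsimp; ring⟩
    · rw [Finset.mem_singleton] at hv
      obtain ⟨p, hp, hpv⟩ := Finset.mem_image.mp (S.min'_mem hSne)
      rw [Finset.mem_filter] at hp
      subst hv
      apply Finset.mem_image.mpr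
      exact ⟨(p.1, p.2+1), Finset.mem_filter.mpr ⟨(hup p hp.1).2, by dsimp; omega⟩,
        by dsimp; omega⟩
  have hcard : (S.image (fun v => v+1) ∪ {S.min' hSne - 1}).card = S.card + 1 := by
    rw [Finset.card_union_of_disjoint, Finset.card_image_of_injective _ (add_left_injective 1),
      Finset.card_singleton]
    simp only [Finset.disjoint_singleton_right, Finset.mem_image]
    rintro ⟨w, hw, hww⟩
    have := S.min'_le w hw
    omega
  calc (Xf.filter (fun p => p.1 + p.2 = c)).card + 1 = S.card + 1 := by
        rw [hS, ← fiber_card_eq]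
    _ = _ := hcard.symm
    _ ≤ T.card := Finset.card_le_card hsub
    _ ≤ (Yf.filter (fun p => p.1 + p.2 = c+1)).card := by rw [hT]; exact Finset.card_image_le

lemma step_down {Xf Yf : Finset (ℤ×ℤ)}
    (hdn : ∀ p ∈ Xf, ((p.1-1, p.2) ∈ Yf ∧ (p.1, p.2-1) ∈ Yf))
    {c : ℤ} (hc : 0 < (Xf.filter (fun p => p.1 + p.2 = c)).card) :
    (Xf.filter (fun p => p.1 + p.2 = c)).card + 1
      ≤ (Yf.filter (fun p => p.1 + p.2 = c-1)).card := by
  classical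
  set S := (Xf.filter (fun p => p.1 + p.2 = c)).image (fun p => p.1 - p.2) with hS
  set T := (Yf.filter (fun p => p.1 + p.2 = c-1)).image (fun p => p.1 - p.2) with hT
  have hSne : S.Nonempty := Finset.image_nonempty.mpr (Finset.card_pos.mp hc)
  have hsub : S.image (fun v => v - 1) ∪ {S.max' hSne + 1} ⊆ T := by
    intro v hv
    rcases Finset.mem_union.mp hv with hv | hv
    · obtain ⟨w, hw, rfl⟩ := Finset.mem_image.mp hv
      obtain ⟨p, hp, rfl⟩ := Finset.mem_image.mp hw
      rw [Finset.mem_filter] at hp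
      apply Finset.mem_image.mpr
      exact ⟨(p.1-1, p.2), Finset.mem_filter.mpr ⟨(hdn p hp.1).1, by dsimp; omega⟩,
        by dsimp; ring⟩
    · rw [Finset.mem_singleton] at hv
      obtain ⟨p, hp, hpv⟩ := Finset.mem_image.mp (S.max'_mem hSne)
      rw [Finset.mem_filter] at hp
      subst hv
      apply Finset.mem_image.mpr
      exact ⟨(p.1, p.2-1), Finset.mem_filter.mpr ⟨(hdn p hp.1).2, by dsimp; omega⟩,
        by dsimp; omega⟩
  have hcard : (S.image (fun v => v-1) ∪ {S.max' hSne + 1}).card = S.card + 1 := by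
    rw [Finset.card_union_of_disjoint, Finset.card_image_of_injective _ (sub_left_injective),
      Finset.card_singleton]
    simp only [Finset.disjoint_singleton_right, Finset.mem_image]
    rintro ⟨w, hw, hww⟩
    have := S.le_max' w hw
    omega
  calc (Xf.filter (fun p => p.1 + p.2 = c)).card + 1 = S.card + 1 := by
        rw [hS, ← fiber_card_eq]
    _ = _ := hcard.symm
    _ ≤ T.card := Finset.card_le_card hsub
    _ ≤ (Yf.filter (fun p => p.1 + p.2 = c-1)).card := by rw [hT]; exact Finset.card_image_le

lemma quad_arith (m N k : ℤ) (hm : 1 ≤ m) (hN : 0 ≤ N) (h : 2*m + N ≤ 4*k+2) :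
    N*m ≤ 2*k*(k+1) := by
  rcases le_or_gt m k with h1 | h1
  · nlinarith [mul_nonneg (sub_nonneg.mpr h1) (by linarith : (0:ℤ) ≤ k+1-m),
      mul_nonneg (by linarith : (0:ℤ) ≤ 4*k+2-2*m-N) (by linarith : (0:ℤ) ≤ m)]
  · nlinarith [mul_nonneg (by linarith : (0:ℤ) ≤ m-k-1) (by linarith : (0:ℤ) ≤ m-k),
      mul_nonneg (by linarith : (0:ℤ) ≤ 4*k+2-2*m-N) (by linarith : (0:ℤ) ≤ m)]

lemma bdry_big {X : Set (ℤ×ℤ)} (hX : X.Finite) (k : ℕ)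
    (hcard : 2*k*(k+1) < X.ncard) :
    4*(k+1) ≤ (vertexBoundary latticeZ2 X).ncard := by
  classical
  have hB : (vertexBoundary latticeZ2 X).Finite := bdryFin hX
  set Xf := hX.toFinset with hXf
  set Bf := hB.toFinset with hBf
  set Yf := Xf ∪ Bf with hYf
  have hXcard : X.ncard = Xf.card := Set.ncard_eq_toFinset_card X hX
  have hBcard : (vertexBoundary latticeZ2 X).ncard = Bf.card :=
    Set.ncard_eq_toFinset_card _ hB
  have hne : Xf.Nonempty := by
    rw [← Finset.card_pos, ← hXcard]; omega
  -- neighbours of X points are in Y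
  have hnbr : ∀ p ∈ Xf, ∀ q : ℤ×ℤ, latticeZ2.Adj q p → q ∈ Yf := by
    intro p hp q hadj
    by_cases hq : q ∈ X
    · exact Finset.mem_union_left _ (hX.mem_toFinset.mpr hq)
    · refine Finset.mem_union_right _ (hB.mem_toFinset.mpr ?_)
      exact ⟨hq, p, hX.mem_toFinset.mp hp, hadj⟩
  have hup : ∀ p ∈ Xf, ((p.1+1, p.2) ∈ Yf ∧ (p.1, p.2+1) ∈ Yf) := by
    intro p hp
    constructor <;> exact hnbr p hp _ (by rw [lattice_adj']; dsimp; omega)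
  have hdn : ∀ p ∈ Xf, ((p.1-1, p.2) ∈ Yf ∧ (p.1, p.2-1) ∈ Yf) := by
    intro p hp
    constructor <;> exact hnbr p hp _ (by rw [lattice_adj']; dsimp; omega)
  set f : ℤ → ℕ := fun c => (Xf.filter (fun p => p.1 + p.2 = c)).card with hf
  set g : ℤ → ℕ := fun c => (Yf.filter (fun p => p.1 + p.2 = c)).card with hg
  set U := Xf.image (fun p => p.1 + p.2) with hU
  have hUne : U.Nonempty := Finset.image_nonempty.mpr hne
  set A := U.min' hUne with hA
  set Bu := U.max' hUne with hBu
  have hfb : ∀ p ∈ Xf, A ≤ p.1 + p.2 ∧ p.1 + p.2 ≤ Bu := by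
    intro p hp
    exact ⟨U.min'_le _ (Finset.mem_image_of_mem _ hp),
      U.le_max' _ (Finset.mem_image_of_mem _ hp)⟩
  have hAB : A ≤ Bu := by
    obtain ⟨p, hp⟩ := hne
    have := hfb p hp; omega
  have hYb : ∀ p ∈ Yf, A - 1 ≤ p.1 + p.2 ∧ p.1 + p.2 ≤ Bu + 1 := by
    intro p hp
    rcases Finset.mem_union.mp hp with hp | hp
    · have := hfb p hp; omega
    · obtain ⟨-, x, hx, hadj⟩ := hB.mem_toFinset.mp hp
      rw [lattice_adj'] at hadj
      have := hfb x (hX.mem_toFinset.mpr hx)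
      omega
  -- fiberwise cardinalities
  have cardX : Xf.card = ∑ c ∈ Finset.Icc (A-1) (Bu+1), f c :=
    Finset.card_eq_sum_card_fiberwise (fun p hp => Finset.mem_Icc.mpr (by have := hfb p hp; omega))
  have cardY : Yf.card = ∑ c ∈ Finset.Icc (A-1) (Bu+1), g c :=
    Finset.card_eq_sum_card_fiberwise (fun p hp => Finset.mem_Icc.mpr (hYb p hp))
  have cardXN : Xf.card = ∑ c ∈ Finset.Icc A Bu, f c :=
    Finset.card_eq_sum_card_fiberwise (fun p hp => Finset.mem_Icc.mpr (hfb p hp))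
  -- maximiser
  obtain ⟨cs, hcsmem, hmax⟩ := Finset.exists_max_image (Finset.Icc A Bu) f
    ⟨A, Finset.mem_Icc.mpr ⟨le_refl A, hAB⟩⟩
  rw [Finset.mem_Icc] at hcsmem
  set m := f cs with hm
  have hm1 : 1 ≤ m := by
    obtain ⟨p, hp⟩ := hne
    have h1 : 0 < f (p.1 + p.2) :=
      Finset.card_pos.mpr ⟨p, Finset.mem_filter.mpr ⟨hp, rfl⟩⟩
    have h2 := hmax (p.1+p.2) (Finset.mem_Icc.mpr (hfb p hp))
    omega
  set h : ℤ → ℕ := fun c => f c + (if f c ≠ 0 then 1 else 0) with hh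
  have hgh_up : ∀ c : ℤ, h c ≤ g (c+1) := by
    intro c
    by_cases h0 : f c = 0
    · simp [hh, h0, hg]
    · have hstep := step_up hup (c := c) (Nat.pos_of_ne_zero h0)
      simp only [hh, if_pos h0]
      exact hstep
  have hgh_dn : ∀ c : ℤ, h c ≤ g (c-1) := by
    intro c
    by_cases h0 : f c = 0
    · simp [hh, h0, hg]
    · have hstep := step_down hdn (c := c) (Nat.pos_of_ne_zero h0)
      simp only [hh, if_pos h0]
      exact hstep
  have hf0 : ∀ c : ℤ, (c < A ∨ Bu < c) → f c = 0 := by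
    intro c hc
    rw [hf]
    simp only [Finset.card_eq_zero]
    rw [Finset.filter_eq_empty_iff]
    intro p hp
    have := hfb p hp
    omega
  -- splitting the big interval
  have esplit : Finset.Icc (A-1) (Bu+1)
      = (Finset.Icc (A-1) (cs-1) ∪ {cs}) ∪ Finset.Icc (cs+1) (Bu+1) := by
    ext c
    simp only [Finset.mem_Icc, Finset.mem_union, Finset.mem_singleton]
    omega
  have djL : Disjoint (Finset.Icc (A-1) (cs-1)) ({cs} : Finset ℤ) := by
    simp only [Finset.disjoint_singleton_right, Finset.mem_Icc]
    omega
  have djLR : Disjoint (Finset.Icc (A-1) (cs-1) ∪ {cs}) (Finset.Icc (cs+1) (Bu+1)) := by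
    rw [Finset.disjoint_left]
    intro c hc hc'
    simp only [Finset.mem_union, Finset.mem_singleton, Finset.mem_Icc] at hc hc'
    omega
  have gsplit : ∑ c ∈ Finset.Icc (A-1) (Bu+1), g c
      = (∑ c ∈ Finset.Icc (A-1) (cs-1), g c) + g cs + ∑ c ∈ Finset.Icc (cs+1) (Bu+1), g c := by
    rw [esplit, Finset.sum_union djLR, Finset.sum_union djL, Finset.sum_singleton]
  have fsplit : ∑ c ∈ Finset.Icc (A-1) (Bu+1), f c
      = (∑ c ∈ Finset.Icc (A-1) (cs-1), f c) + f cs + ∑ c ∈ Finset.Icc (cs+1) (Bu+1), f c := by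
    rw [esplit, Finset.sum_union djLR, Finset.sum_union djL, Finset.sum_singleton]
  -- reindexing
  have reR : ∑ c ∈ Finset.Icc (cs+1) (Bu+1), h (c-1) = ∑ c ∈ Finset.Icc cs Bu, h c := by
    rw [show Finset.Icc (cs+1) (Bu+1) = (Finset.Icc cs Bu).map (addRightEmbedding 1) from
      (Finset.map_add_right_Icc _ _ _).symm, Finset.sum_map]
    apply Finset.sum_congr rfl
    intro c _
    simp [addRightEmbedding_apply]
  have reL : ∑ c ∈ Finset.Icc (A-1) (cs-1), h (c+1) = ∑ c ∈ Finset.Icc A cs, h c := by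
    rw [show Finset.Icc A cs = (Finset.Icc (A-1) (cs-1)).map (addRightEmbedding 1) from by
      rw [Finset.map_add_right_Icc]; congr 1 <;> ring, Finset.sum_map]
    apply Finset.sum_congr rfl
    intro c _
    simp [addRightEmbedding_apply]
  -- bounds on sums
  have hSR : ∑ c ∈ Finset.Icc cs Bu, h c ≤ ∑ c ∈ Finset.Icc (cs+1) (Bu+1), g c := by
    rw [← reR]
    apply Finset.sum_le_sum
    intro c _
    have := hgh_up (c-1)
    simpa using this
  have hSL : ∑ c ∈ Finset.Icc A cs, h c ≤ ∑ c ∈ Finset.Icc (A-1) (cs-1), g c := by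
    rw [← reL]
    apply Finset.sum_le_sum
    intro c _
    have := hgh_dn (c+1)
    simpa using this
  -- h-sums decompose
  set NR := ((Finset.Icc cs Bu).filter (fun c => f c ≠ 0)).card with hNR
  set NL := ((Finset.Icc A cs).filter (fun c => f c ≠ 0)).card with hNL
  have hsumR : ∑ c ∈ Finset.Icc cs Bu, h c = (∑ c ∈ Finset.Icc cs Bu, f c) + NR := by
    rw [hh, Finset.sum_add_distrib, hNR, Finset.card_filter]
  have hsumL : ∑ c ∈ Finset.Icc A cs, h c = (∑ c ∈ Finset.Icc A cs, f c) + NL := by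
    rw [hh, Finset.sum_add_distrib, hNL, Finset.card_filter]
  -- f-sums shift
  have hfR : ∑ c ∈ Finset.Icc cs Bu, f c
      = m + ∑ c ∈ Finset.Icc (cs+1) (Bu+1), f c := by
    have e1 : Finset.Icc cs Bu = {cs} ∪ Finset.Icc (cs+1) Bu := by
      ext c; simp only [Finset.mem_Icc, Finset.mem_union, Finset.mem_singleton]; omega
    have e2 : Finset.Icc (cs+1) (Bu+1) = Finset.Icc (cs+1) Bu ∪ {Bu+1} := by
      ext c; simp only [Finset.mem_Icc, Finset.mem_union, Finset.mem_singleton]; omega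
    have d1 : Disjoint ({cs} : Finset ℤ) (Finset.Icc (cs+1) Bu) := by
      simp only [Finset.disjoint_singleton_left, Finset.mem_Icc]; omega
    have d2 : Disjoint (Finset.Icc (cs+1) Bu) ({Bu+1} : Finset ℤ) := by
      simp only [Finset.disjoint_singleton_right, Finset.mem_Icc]; omega
    rw [e1, e2, Finset.sum_union d1, Finset.sum_union d2, Finset.sum_singleton,
      Finset.sum_singleton, hf0 (Bu+1) (by omega)]
    omega
  have hfL : ∑ c ∈ Finset.Icc A cs, f c
      = m + ∑ c ∈ Finset.Icc (A-1) (cs-1), f c := by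
    have e1 : Finset.Icc A cs = Finset.Icc A (cs-1) ∪ {cs} := by
      ext c; simp only [Finset.mem_Icc, Finset.mem_union, Finset.mem_singleton]; omega
    have e2 : Finset.Icc (A-1) (cs-1) = {A-1} ∪ Finset.Icc A (cs-1) := by
      ext c; simp only [Finset.mem_Icc, Finset.mem_union, Finset.mem_singleton]; omega
    have d1 : Disjoint (Finset.Icc A (cs-1)) ({cs} : Finset ℤ) := by
      simp only [Finset.disjoint_singleton_right, Finset.mem_Icc]; omega
    have d2 : Disjoint ({A-1} : Finset ℤ) (Finset.Icc A (cs-1)) := by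
      simp only [Finset.disjoint_singleton_left, Finset.mem_Icc]; omega
    rw [e1, e2, Finset.sum_union d1, Finset.sum_union d2, Finset.sum_singleton,
      Finset.sum_singleton, hf0 (A-1) (by omega)]
    omega
  -- N bound
  set N := ((Finset.Icc A Bu).filter (fun c => f c ≠ 0)).card with hN
  have hNsum : N + 1 ≤ NL + NR := by
    have hu : (Finset.Icc A cs).filter (fun c => f c ≠ 0)
        ∪ (Finset.Icc cs Bu).filter (fun c => f c ≠ 0)
        = (Finset.Icc A Bu).filter (fun c => f c ≠ 0) := by
      rw [← Finset.filter_union]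
      congr 1
      ext c; simp only [Finset.mem_Icc, Finset.mem_union]; omega
    have hi : cs ∈ (Finset.Icc A cs).filter (fun c => f c ≠ 0)
        ∩ (Finset.Icc cs Bu).filter (fun c => f c ≠ 0) := by
      simp only [Finset.mem_inter, Finset.mem_filter, Finset.mem_Icc]
      refine ⟨⟨⟨hcsmem.1, le_refl _⟩, by omega⟩, ⟨⟨le_refl _, hcsmem.2⟩, by omega⟩⟩
    have := Finset.card_union_add_card_inter
      ((Finset.Icc A cs).filter (fun c => f c ≠ 0))
      ((Finset.Icc cs Bu).filter (fun c => f c ≠ 0))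
    rw [hu] at this
    have hi1 : 1 ≤ ((Finset.Icc A cs).filter (fun c => f c ≠ 0)
        ∩ (Finset.Icc cs Bu).filter (fun c => f c ≠ 0)).card :=
      Finset.card_pos.mpr ⟨cs, hi⟩
    omega
  -- X card ≤ N * m
  have hXle : Xf.card ≤ N * m := by
    rw [cardXN, ← Finset.sum_filter_ne_zero]
    calc ∑ c ∈ (Finset.Icc A Bu).filter (fun c => f c ≠ 0), f c
        ≤ ((Finset.Icc A Bu).filter (fun c => f c ≠ 0)).card • m := by
          apply Finset.sum_le_card_nsmul
          intro c hc
          exact hmax c (Finset.mem_filter.mp hc).1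
      _ = N * m := by rw [hN, smul_eq_mul]
  -- Y card = X card + B card
  have hYcard : Yf.card = Xf.card + Bf.card := by
    rw [hYf]
    apply Finset.card_union_of_disjoint
    rw [Finset.disjoint_left]
    intro p hp hq
    exact (hB.mem_toFinset.mp hq).1 (hX.mem_toFinset.mp hp)
  -- main inequality
  have hmain : Xf.card + 2*m + N + 1 ≤ Yf.card := by
    have hfcs : f cs ≤ g cs := Finset.card_le_card (Finset.filter_subset_filter _
      (Finset.subset_union_left))
    calc Xf.card + 2*m + N + 1
        ≤ Xf.card + 2*m + NL + NR := by omega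
      _ = ((∑ c ∈ Finset.Icc (A-1) (cs-1), f c) + m + NL) + f cs
            + ((∑ c ∈ Finset.Icc (cs+1) (Bu+1), f c) + m + NR) := by
          rw [cardX, fsplit]; omega
      _ = ((∑ c ∈ Finset.Icc A cs, f c) + NL) + f cs
            + ((∑ c ∈ Finset.Icc cs Bu, f c) + NR) := by
          rw [hfL, hfR]; omega
      _ = (∑ c ∈ Finset.Icc A cs, h c) + f cs + ∑ c ∈ Finset.Icc cs Bu, h c := by
          rw [hsumL, hsumR]
      _ ≤ (∑ c ∈ Finset.Icc (A-1) (cs-1), g c) + g cs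
            + ∑ c ∈ Finset.Icc (cs+1) (Bu+1), g c := by
          have := hSL; have := hSR; omega
      _ = Yf.card := by rw [cardY, gsplit]
  have hBge : 2*m + N + 1 ≤ Bf.card := by omega
  -- finish by contradiction
  by_contra hcon
  push_neg at hcon
  rw [hBcard] at hcon
  have hq : ((N : ℤ)) * m ≤ 2*(k:ℤ)*((k:ℤ)+1) := by
    apply quad_arith _ _ _ (by exact_mod_cast hm1) (by positivity)
    have hlin : 2*m + N ≤ 4*k + 2 := by omega
    push_cast
    omega
  have hqn : N * m ≤ 2*k*(k+1) := by exact_mod_cast hq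
  rw [hXcard] at hcard
  exact lt_irrefl _ (lt_of_le_of_lt (hXle.trans hqn) hcard)

/-- ball sizes -/
def gfun (k : ℕ) : ℕ := 1 + 2*k*(k+1)

lemma gfun_succ (k : ℕ) : gfun (k+1) = gfun k + 4*(k+1) := by
  show 1 + 2*(k+1)*(k+1+1) = 1 + 2*k*(k+1) + 4*(k+1)
  ring

lemma gfun_mono : Monotone gfun := by
  apply monotone_nat_of_le_succ
  intro k
  rw [gfun_succ]
  omega

lemma gfun_pos (k : ℕ) : 1 ≤ gfun k := by unfold gfun; omega

lemma gfun_ge (k : ℕ) : k ≤ gfun k := by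
  induction k with
  | zero => simp [gfun]
  | succ k ih => rw [gfun_succ]; omega

lemma isoNum_ball (k : ℕ) : isoNum latticeZ2 (gfun k) = 4*(k+1) := by
  refine le_antisymm (isoNum_ball_le k) ?_
  obtain ⟨Y, hYf, hYc, hBf, hBc⟩ := isoNum_mem (gfun k)
  rw [← hBc]
  apply bdry_big hYf k
  rw [hYc]
  show 2*k*(k+1) < 1 + 2*k*(k+1)
  omega

lemma isoNum_pos (n : ℕ) (hn : 1 ≤ n) : 1 ≤ isoNum latticeZ2 n := by
  obtain ⟨Y, hYf, hYc, hBf, hBc⟩ := isoNum_mem n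
  rw [← hBc]
  have := bdry_big hYf 0 (by omega)
  omega

lemma isoNum_le_gfun {a k : ℕ} (ha : 1 ≤ a) (hk : a ≤ gfun k) :
    a + isoNum latticeZ2 a ≤ gfun (k+1) := by
  obtain ⟨b, rfl⟩ : ∃ b, a = b + 1 := ⟨a - 1, by omega⟩
  have h1 : isoNum latticeZ2 (b+1) ≤ isoNum latticeZ2 (b+1+(gfun k - (b+1))) + (gfun k - (b+1)) :=
    isoNum_add_le b _
  rw [show b+1+(gfun k - (b+1)) = gfun k by omega, isoNum_ball] at h1
  rw [gfun_succ]
  omega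

lemma comp_adj {a b : ℕ+} :
    (comparisonGraph latticeZ2).Adj a b ↔ cAdj latticeZ2 a b ∨ cAdj latticeZ2 b a := Iff.rfl

lemma walk_up : ∀ k : ℕ, ∀ i : ℕ+, (i:ℕ) ≤ gfun k →
    ∃ w : (comparisonGraph latticeZ2).Walk i 1, w.length ≤ k := by
  intro k
  induction k with
  | zero =>
    intro i hi
    have hi1 : i = 1 := by
      apply PNat.coe_injective
      have h2 : (i:ℕ) ≤ 1 := by simpa [gfun] using hi
      have h3 : 0 < (i:ℕ) := i.property
      simp only [PNat.one_coe]
      omega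
    subst hi1
    exact ⟨SimpleGraph.Walk.nil, by simp⟩
  | succ k ih =>
    intro i hi
    by_cases hik : (i:ℕ) ≤ gfun k
    · obtain ⟨w, hw⟩ := ih i hik
      exact ⟨w, hw.trans (Nat.le_succ k)⟩
    · push_neg at hik
      have hgT : gfun k ∈ {a : ℕ | 1 ≤ a ∧ (i:ℕ) ≤ a + isoNum latticeZ2 a} := by
        refine ⟨gfun_pos k, ?_⟩
        have h3 : gfun k + isoNum latticeZ2 (gfun k) = gfun (k+1) := by
          rw [isoNum_ball, gfun_succ]
        omega
      set a := sInf {a : ℕ | 1 ≤ a ∧ (i:ℕ) ≤ a + isoNum latticeZ2 a} with ha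
      obtain ⟨ha1, hai⟩ : 1 ≤ a ∧ (i:ℕ) ≤ a + isoNum latticeZ2 a := Nat.sInf_mem ⟨_, hgT⟩
      have hagk : a ≤ gfun k := Nat.sInf_le hgT
      -- the lower bound of the interval
      have hlow : a - 1 + isoNum₀ latticeZ2 (a - 1) < (i:ℕ) := by
        rcases Nat.eq_or_lt_of_le ha1 with h1 | h1
        · simp only [← h1]
          show 0 + isoNum₀ latticeZ2 0 < (i:ℕ)
          have : isoNum₀ latticeZ2 0 = 1 := rfl
          rw [this]
          have := gfun_pos k
          omega
        · have hnm : a - 1 ∉ {a : ℕ | 1 ≤ a ∧ (i:ℕ) ≤ a + isoNum latticeZ2 a} :=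
            Nat.notMem_of_lt_sInf (by omega)
          simp only [Set.mem_setOf_eq, not_and, not_le] at hnm
          have h2 := hnm (by omega)
          have h3 : isoNum₀ latticeZ2 (a-1) = isoNum latticeZ2 (a-1) := by
            unfold isoNum₀
            rw [if_neg (by omega)]
          omega
      -- build the walk
      set ap : ℕ+ := ⟨a, by omega⟩ with hap
      have hadj : (comparisonGraph latticeZ2).Adj i ap := by
        rw [comp_adj]
        right
        refine ⟨?_, ?_, ?_⟩
        · rw [← PNat.coe_lt_coe]
          show a < (i:ℕ)
          omega
        · show (ap:ℕ) - 1 + isoNum₀ latticeZ2 ((ap:ℕ) - 1) < (i:ℕ)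
          exact hlow
        · exact hai
      obtain ⟨w, hw⟩ := ih ap hagk
      exact ⟨SimpleGraph.Walk.cons hadj w, by
        simp only [SimpleGraph.Walk.length_cons]
        omega⟩

lemma walk_down : ∀ k : ℕ, ∀ i : ℕ+, ∀ w : (comparisonGraph latticeZ2).Walk i 1,
    w.length ≤ k → (i:ℕ) ≤ gfun k := by
  intro k
  induction k with
  | zero =>
    intro i w hw
    have hi1 : i = 1 := SimpleGraph.Walk.eq_of_length_eq_zero (p := w) (by omega)
    subst hi1
    simpa using gfun_pos 0
  | succ k ih =>
    intro i w hw
    cases w with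
    | nil =>
      have := gfun_pos (k+1)
      simp only [PNat.one_coe]
      omega
    | cons hadj w' =>
      rename_i c
      have hc : (c:ℕ) ≤ gfun k := ih c w' (by
        simp only [SimpleGraph.Walk.length_cons] at hw
        omega)
      rcases hadj with h | h
      · -- cAdj i c : i < c
        have h1 : (i:ℕ) < (c:ℕ) := h.1
        exact le_trans (le_of_lt h1) (le_trans hc (gfun_mono (Nat.le_succ k)))
      · -- cAdj c i : i ≤ c + isoNum c
        have h2 : (i:ℕ) ≤ (c:ℕ) + isoNum latticeZ2 (c:ℕ) := h.2.2
        exact le_trans h2 (isoNum_le_gfun c.property hc)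

lemma comp_reachable (i : ℕ+) : (comparisonGraph latticeZ2).Reachable i 1 := by
  obtain ⟨w, -⟩ := walk_up (i:ℕ) i (gfun_ge _)
  exact ⟨w⟩

lemma dist_le_iff (i : ℕ+) (k : ℕ) :
    (comparisonGraph latticeZ2).dist i 1 ≤ k ↔ (i:ℕ) ≤ gfun k := by
  constructor
  · intro h
    obtain ⟨w, hw⟩ := (comp_reachable i).exists_walk_length_eq_dist
    exact walk_down k i w (by omega)
  · intro h
    obtain ⟨w, hw⟩ := walk_up k i h
    exact le_trans (SimpleGraph.dist_le w) hw

lemma pnat_image_le (b : ℕ) (hb : 1 ≤ b) :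
    (fun i : ℕ+ => (i:ℕ)) '' {i : ℕ+ | (i:ℕ) ≤ b} = Set.Icc 1 b := by
  ext n
  simp only [Set.mem_image, Set.mem_setOf_eq, Set.mem_Icc]
  constructor
  · rintro ⟨i, hi, rfl⟩
    exact ⟨i.property, hi⟩
  · rintro ⟨h1, h2⟩
    exact ⟨⟨n, by omega⟩, h2, rfl⟩

lemma pnat_image_between (a b : ℕ) (ha : 1 ≤ a) :
    (fun i : ℕ+ => (i:ℕ)) '' {i : ℕ+ | a < (i:ℕ) ∧ (i:ℕ) ≤ b} = Set.Ioc a b := by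
  ext n
  simp only [Set.mem_image, Set.mem_setOf_eq, Set.mem_Ioc]
  constructor
  · rintro ⟨i, hi, rfl⟩
    exact hi
  · rintro ⟨h1, h2⟩
    exact ⟨⟨n, by omega⟩, ⟨h1, h2⟩, rfl⟩


/-- **Lemma (spheres and balls in the universal comparison graph of `(ℤ², ℓ¹)`).**
For every `r ≥ 1`, the sphere `S(r; G_c) = {i : d_{G_c}(i,1) = r}` has exactly `4r`
elements and the closed ball `B(r; G_c) = {i : d_{G_c}(i,1) ≤ r}` has exactly
`1 + 2r(r+1)` elements. -/
theorem comparisonGraph_latticeZ2_sphere_ball (r : ℕ) (hr : 1 ≤ r) :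
    {i : ℕ+ | (comparisonGraph latticeZ2).dist i 1 = r}.encard = (4 * r : ℕ)
    ∧ {i : ℕ+ | (comparisonGraph latticeZ2).dist i 1 ≤ r}.encard
        = (1 + 2 * r * (r + 1) : ℕ) := by
  obtain ⟨s, rfl⟩ : ∃ s, r = s + 1 := ⟨r - 1, by omega⟩
  constructor
  · have hset : {i : ℕ+ | (comparisonGraph latticeZ2).dist i 1 = s+1}
        = {i : ℕ+ | gfun s < (i:ℕ) ∧ (i:ℕ) ≤ gfun (s+1)} := by
      ext i
      simp only [Set.mem_setOf_eq]
      have h1 := dist_le_iff i (s+1)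
      have h2 := dist_le_iff i s
      constructor
      · intro h
        refine ⟨?_, h1.mp (by omega)⟩
        by_contra hc
        push_neg at hc
        have := h2.mpr hc
        omega
      · rintro ⟨ha, hb⟩
        have hb' := h1.mpr hb
        have ha' : ¬ ((comparisonGraph latticeZ2).dist i 1 ≤ s) := fun hc => by
          have := h2.mp hc; omega
        omega
    rw [hset, ← Set.InjOn.encard_image (f := fun i : ℕ+ => (i:ℕ))
      (fun x _ y _ h => PNat.coe_injective h),
      pnat_image_between _ _ (gfun_pos s), ← Finset.coe_Ioc,
      Set.encard_coe_eq_coe_finsetCard, Nat.card_Ioc]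
    congr 1
    rw [gfun_succ]
    omega
  · have hset : {i : ℕ+ | (comparisonGraph latticeZ2).dist i 1 ≤ s+1}
        = {i : ℕ+ | (i:ℕ) ≤ gfun (s+1)} := by
      ext i
      simp only [Set.mem_setOf_eq]
      exact dist_le_iff i (s+1)
    rw [hset, ← Set.InjOn.encard_image (f := fun i : ℕ+ => (i:ℕ))
      (fun x _ y _ h => PNat.coe_injective h),
      pnat_image_le _ (gfun_pos (s+1)), ← Finset.coe_Icc,
      Set.encard_coe_eq_coe_finsetCard, Nat.card_Icc]
    rw [Nat.add_sub_cancel]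
    rfl
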